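/- Let r ≥ 1, let α_1 ≤ ... ≤ α_r and β_1 ≤ ... ≤ β_{r+1} be positive real numbers such that α_i ≥ β_{i+1} for all i = 1, ..., r, and Σ_{i=1}^r α_i = Σ_{i=1}^{r+1} β_i. Then Σ_{i=1}^{r+1} β_i² ≤ Σ_{i=1}^r α_i². -/

import Mathlib

/-- Lemma 2.4 (interlacing lemma): for positive increasing sequences
`α_1 ≤ … ≤ α_r` and `β_1 ≤ … ≤ β_{r+1}` with `α_i ≥ β_{i+1}` and equal sums,
the quadratic sum of the β's is at most that of the α's. -/
theorem interlacing_quadratic_sums (r : ℕ) (hr : 1 ≤ r)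
    (α : Fin r → ℝ) (β : Fin (r + 1) → ℝ)
    (hαmono : Monotone α) (hβmono : Monotone β)
    (hαpos : ∀ i, 0 < α i) (hβpos : ∀ i, 0 < β i)
    (hinter : ∀ i : Fin r, β i.succ ≤ α i)
    (hsum : ∑ i, α i = ∑ i, β i) :
    ∑ i, (β i) ^ 2 ≤ ∑ i, (α i) ^ 2 := by
  have hd : ∑ i : Fin r, (α i - β i.succ) = β 0 := by
    rw [Finset.sum_sub_distrib, hsum, Fin.sum_univ_succ β]
    ring
  have key : ∀ i ∈ Finset.univ, (α i - β i.succ) * β 0 ≤ α i ^ 2 - β i.succ ^ 2 := by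
    intro i _
    have h1 : β 0 ≤ β i.succ := hβmono (Fin.zero_le _)
    nlinarith [hinter i, hαpos i, hβpos i.succ]
  rw [Fin.sum_univ_succ (fun i => (β i) ^ 2)]
  calc β 0 ^ 2 + ∑ i : Fin r, β i.succ ^ 2
      = ∑ i : Fin r, (α i - β i.succ) * β 0 + ∑ i : Fin r, β i.succ ^ 2 := by
        rw [← Finset.sum_mul, hd]; ring
    _ ≤ ∑ i : Fin r, (α i ^ 2 - β i.succ ^ 2) + ∑ i : Fin r, β i.succ ^ 2 :=
        add_le_add_left (Finset.sum_le_sum key) _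
    _ = ∑ i, α i ^ 2 := by rw [← Finset.sum_add_distrib]; simp
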